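/- arXiv:2502.03969 — 3 statements merged into one kernel-verified Lean document; each statement's English description precedes it below -/
import Mathlib

section
/- In the confounding model $X = \Gamma^T H + E$ with $\mathbb{E}[HH^T] = I_q$, $\mathbb{E}[HE^T] = 0$, $\mathbb{E}[H] = 0$, $\mathbb{E}[E] = 0$, $\mathrm{Cov}(E) = \Sigma_E$ positive definite, and $b = \mathbb{E}[XX^T]^{-1}\mathbb{E}[XH^T]\delta$ for $\delta \in \mathbb{R}^q$, one has $\mathbb{E}[(H^T\delta - X^T b)^2] \leq \|\delta\|_2^2 \, \lambda_{\max}(\Sigma_E) \, \lambda_{\min}(\Gamma)^{-2}$, where $\lambda_{\min}(\Gamma)$ is the smallest singular value of the $q \times p$ matrix $\Gamma$ (assumed positive). -/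
open Matrix MeasureTheory BigOperators

lemma my_l2_mul_int {Ω : Type*} [MeasurableSpace Ω] {μ : Measure Ω} {f g : Ω → ℝ}
    (hf : MemLp f 2 μ) (hg : MemLp g 2 μ) : Integrable (fun ω => f ω * g ω) μ := by
  rw [← memLp_one_iff_integrable]
  have h := MemLp.smul (p := 2) (q := 2) (r := 1) hg hf
  exact h

lemma my_dot_trans {m n : ℕ} (B : Matrix (Fin m) (Fin n) ℝ) (x : Fin m → ℝ) (y : Fin n → ℝ) :
    x ⬝ᵥ B.mulVec y = Bᵀ.mulVec x ⬝ᵥ y := by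
  rw [Matrix.dotProduct_mulVec, Matrix.mulVec_transpose]

lemma my_int_dot {Ω : Type*} [MeasurableSpace Ω] (μ : Measure Ω) {m n : ℕ}
    (a : Fin m → ℝ) (c : Fin n → ℝ) (F : Ω → Fin m → ℝ) (G : Ω → Fin n → ℝ)
    (hF : ∀ i, MemLp (fun ω => F ω i) 2 μ) (hG : ∀ j, MemLp (fun ω => G ω j) 2 μ) :
    ∫ ω, (a ⬝ᵥ F ω) * (c ⬝ᵥ G ω) ∂μ = ∑ i, ∑ j, a i * c j * ∫ ω, F ω i * G ω j ∂μ := by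
  have key : ∀ ω, (a ⬝ᵥ F ω) * (c ⬝ᵥ G ω) = ∑ i, ∑ j, a i * c j * (F ω i * G ω j) := by
    intro ω
    simp only [dotProduct, Finset.sum_mul_sum]
    exact Finset.sum_congr rfl fun i _ => Finset.sum_congr rfl fun j _ => by ring
  simp only [key]
  rw [integral_finset_sum]
  · refine Finset.sum_congr rfl fun i _ => ?_
    rw [integral_finset_sum]
    · exact Finset.sum_congr rfl fun j _ => integral_const_mul _ _
    · exact fun j _ => ((my_l2_mul_int (hF i) (hG j)).const_mul _)
  · intro i _
    exact integrable_finset_sum _ fun j _ => ((my_l2_mul_int (hF i) (hG j)).const_mul _)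

lemma my_cs_key {s t W D : ℝ} (hs : 0 < s) (hW : s * W ≤ t) (hCS : t ^ 2 ≤ W * D)
    (ht : 0 ≤ t) (hD : 0 ≤ D) : s * t ≤ D := by
  rcases eq_or_lt_of_le ht with h | h
  · rw [← h]; simpa using hD
  · nlinarith [mul_le_mul_of_nonneg_right hW hD, mul_le_mul_of_nonneg_left hCS hs.le]

set_option maxHeartbeats 1000000 in
/-- Bias bound in the confounding model `X = Γᵀ H + E` with `E[H]=0`, `E[E]=0`, `E[HHᵀ]=I_q`,
`E[HEᵀ]=0`, `Cov(E) = Σ_E` positive definite, and `b = E[XXᵀ]⁻¹ E[XHᵀ] δ = (ΓᵀΓ + Σ_E)⁻¹ Γᵀ δ`: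
`E[(Hᵀδ - Xᵀb)²] ≤ ‖δ‖² λ_max(Σ_E) λ_min(Γ)⁻²`, where `σmin = λ_min(Γ) > 0` is the smallest
singular value of `Γ` (Rayleigh characterization `σmin² ‖x‖² ≤ xᵀ Γ Γᵀ x`) and `lmax` the
largest eigenvalue of `Σ_E` (`xᵀ Σ_E x ≤ lmax ‖x‖²`). -/
theorem confounding_bias_bound
    {Ω : Type*} [MeasurableSpace Ω] (μ : Measure Ω) [IsProbabilityMeasure μ]
    (p q : ℕ) (hqp : q ≤ p)
    (H : Ω → Fin q → ℝ) (Ev : Ω → Fin p → ℝ)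
    (hHm : ∀ i, MemLp (fun ω => H ω i) 2 μ)
    (hEm : ∀ i, MemLp (fun ω => Ev ω i) 2 μ)
    (hHmean : ∀ i, ∫ ω, H ω i ∂μ = 0)
    (hEmean : ∀ i, ∫ ω, Ev ω i ∂μ = 0)
    (hHH : ∀ i j, ∫ ω, H ω i * H ω j ∂μ = (1 : Matrix (Fin q) (Fin q) ℝ) i j)
    (hHE : ∀ i j, ∫ ω, H ω i * Ev ω j ∂μ = 0)
    (SE : Matrix (Fin p) (Fin p) ℝ) (hSE : SE.PosDef)
    (hEE : ∀ i j, ∫ ω, Ev ω i * Ev ω j ∂μ = SE i j)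
    (Γ : Matrix (Fin q) (Fin p) ℝ)
    (σmin lmax : ℝ) (hσ : 0 < σmin)
    (hΓ : ∀ x : Fin q → ℝ, σmin ^ 2 * (∑ i, x i ^ 2) ≤ x ⬝ᵥ (Γ * Γᵀ).mulVec x)
    (hlmax : ∀ x : Fin p → ℝ, x ⬝ᵥ SE.mulVec x ≤ lmax * ∑ i, x i ^ 2)
    (X : Ω → Fin p → ℝ) (hX : X = fun ω => Γᵀ.mulVec (H ω) + Ev ω)
    (δ : Fin q → ℝ) (b : Fin p → ℝ)
    (hb : b = (Γᵀ * Γ + SE)⁻¹.mulVec (Γᵀ.mulVec δ)) :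
    ∫ ω, (δ ⬝ᵥ H ω - X ω ⬝ᵥ b) ^ 2 ∂μ ≤ (∑ i, δ i ^ 2) * lmax * (σmin ^ 2)⁻¹ := by
  rcases Nat.eq_zero_or_pos p with hp | hp
  · have hq : q = 0 := by omega
    subst hq; subst hp
    simp [dotProduct]
  -- main case
  set M : Matrix (Fin p) (Fin p) ℝ := Γᵀ * Γ + SE with hMdef
  set A : Matrix (Fin q) (Fin q) ℝ := Γ * Γᵀ with hAdef
  set u : Fin q → ℝ := δ - Γ.mulVec b with hudef
  -- symmetry facts
  have hSEsym : SEᵀ = SE := by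
    rw [← Matrix.conjTranspose_eq_transpose_of_trivial]; exact hSE.1
  have hMsym : Mᵀ = M := by
    rw [hMdef]
    simp [Matrix.transpose_add, Matrix.transpose_mul, Matrix.transpose_transpose, hSEsym]
  have hAsym : Aᵀ = A := by
    rw [hAdef]
    simp [Matrix.transpose_mul, Matrix.transpose_transpose]
  -- quadratic form rewrites
  have hqf : ∀ x : Fin p → ℝ, x ⬝ᵥ M.mulVec x
      = Γ.mulVec x ⬝ᵥ Γ.mulVec x + x ⬝ᵥ SE.mulVec x := by
    intro x
    rw [hMdef, Matrix.add_mulVec, dotProduct_add, ← Matrix.mulVec_mulVec,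
      my_dot_trans Γᵀ x (Γ.mulVec x), Matrix.transpose_transpose]
  have hdotsq : ∀ {k : ℕ} (v : Fin k → ℝ), 0 ≤ v ⬝ᵥ v := by
    intro k v
    exact Finset.sum_nonneg fun i _ => mul_self_nonneg _
  -- positive definiteness of M
  have hMposd : M.PosDef := by
    refine Matrix.PosDef.of_dotProduct_mulVec_pos ?_ ?_
    · show Mᴴ = M
      rw [Matrix.conjTranspose_eq_transpose_of_trivial, hMsym]
    · intro x hx
      have h3 := hSE.dotProduct_mulVec_pos hx
      simp only [star_trivial] at h3 ⊢
      rw [hqf x]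
      have h2 := hdotsq (Γ.mulVec x)
      linarith
  have hAposd : A.PosDef := by
    refine Matrix.PosDef.of_dotProduct_mulVec_pos ?_ ?_
    · show Aᴴ = A
      rw [Matrix.conjTranspose_eq_transpose_of_trivial, hAsym]
    · intro x hx
      obtain ⟨i, hi⟩ : ∃ i, x i ≠ 0 := by
        by_contra h; push_neg at h; exact hx (funext h)
      have hsum : 0 < ∑ j, x j ^ 2 :=
        Finset.sum_pos' (fun j _ => sq_nonneg _) ⟨i, Finset.mem_univ i, by positivity⟩
      have := hΓ x
      simp only [star_trivial]
      calc (0:ℝ) < σmin ^ 2 * ∑ j, x j ^ 2 := by positivity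
      _ ≤ x ⬝ᵥ A.mulVec x := by rw [hAdef]; exact hΓ x
  -- b satisfies M b = Γᵀ δ
  have hMb : M.mulVec b = Γᵀ.mulVec δ := by
    rw [hb, Matrix.mulVec_mulVec, Matrix.mul_nonsing_inv M hMposd.det_pos.ne'.isUnit,
      Matrix.one_mulVec]
  -- the vector c = Γᵀ A⁻¹ δ
  set w : Fin q → ℝ := A⁻¹.mulVec δ with hwdef
  set c : Fin p → ℝ := Γᵀ.mulVec w with hcdef
  have hAw : A.mulVec w = δ := by
    rw [hwdef, Matrix.mulVec_mulVec, Matrix.mul_nonsing_inv A hAposd.det_pos.ne'.isUnit,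
      Matrix.one_mulVec]
  have hΓc : Γ.mulVec c = δ := by
    rw [hcdef, Matrix.mulVec_mulVec, ← hAdef, hAw]
  -- L2 membership of dot products
  have hHdot : ∀ v : Fin q → ℝ, MemLp (fun ω => v ⬝ᵥ H ω) 2 μ := by
    intro v
    have : (fun ω => v ⬝ᵥ H ω) = fun ω => ∑ i, v i * H ω i := rfl
    rw [this]
    exact memLp_finset_sum _ fun i _ => (hHm i).const_mul _
  have hEdot : ∀ v : Fin p → ℝ, MemLp (fun ω => v ⬝ᵥ Ev ω) 2 μ := by
    intro v
    have : (fun ω => v ⬝ᵥ Ev ω) = fun ω => ∑ i, v i * Ev ω i := rfl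
    rw [this]
    exact memLp_finset_sum _ fun i _ => (hEm i).const_mul _
  -- rewrite the residual
  have hg : ∀ ω, δ ⬝ᵥ H ω - X ω ⬝ᵥ b = u ⬝ᵥ H ω - b ⬝ᵥ Ev ω := by
    intro ω
    rw [hX]
    show δ ⬝ᵥ H ω - (Γᵀ.mulVec (H ω) + Ev ω) ⬝ᵥ b = _
    rw [add_dotProduct, dotProduct_comm (Γᵀ.mulVec (H ω)) b,
      my_dot_trans Γᵀ b (H ω), Matrix.transpose_transpose,
      dotProduct_comm (Ev ω) b, hudef, sub_dotProduct]
    ring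
  -- the integral computation
  have hIA : ∫ ω, (u ⬝ᵥ H ω) * (u ⬝ᵥ H ω) ∂μ = u ⬝ᵥ u := by
    rw [my_int_dot μ u u H H hHm hHm]
    have hrow : ∀ i : Fin q, ∑ j, u i * u j * (1 : Matrix (Fin q) (Fin q) ℝ) i j
        = u i * u i := by
      intro i
      rw [Finset.sum_eq_single i]
      · simp [Matrix.one_apply]
      · intro j _ hj; simp [Matrix.one_apply, Ne.symm hj]
      · intro h; exact absurd (Finset.mem_univ i) h
    simp only [hHH, hrow]
    rfl
  have hIB : ∫ ω, (u ⬝ᵥ H ω) * (b ⬝ᵥ Ev ω) ∂μ = 0 := by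
    rw [my_int_dot μ u b H Ev hHm hEm]
    simp [hHE]
  have hIC : ∫ ω, (b ⬝ᵥ Ev ω) * (b ⬝ᵥ Ev ω) ∂μ = b ⬝ᵥ SE.mulVec b := by
    rw [my_int_dot μ b b Ev Ev hEm hEm]
    simp only [hEE]
    have hbb : b ⬝ᵥ SE.mulVec b = ∑ i, ∑ j, b i * b j * SE i j := by
      simp only [dotProduct, Matrix.mulVec, Finset.mul_sum]
      exact Finset.sum_congr rfl fun i _ => Finset.sum_congr rfl fun j _ => by ring
    rw [hbb]
  have hint : ∫ ω, (δ ⬝ᵥ H ω - X ω ⬝ᵥ b) ^ 2 ∂μ = u ⬝ᵥ u + b ⬝ᵥ SE.mulVec b := by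
    have hexp : ∀ ω, (δ ⬝ᵥ H ω - X ω ⬝ᵥ b) ^ 2
        = (u ⬝ᵥ H ω) * (u ⬝ᵥ H ω) - 2 * ((u ⬝ᵥ H ω) * (b ⬝ᵥ Ev ω))
          + (b ⬝ᵥ Ev ω) * (b ⬝ᵥ Ev ω) := by
      intro ω; rw [hg ω]; ring
    have iA := my_l2_mul_int (hHdot u) (hHdot u)
    have iB := my_l2_mul_int (hHdot u) (hEdot b)
    have iC := my_l2_mul_int (hEdot b) (hEdot b)
    simp only [hexp]
    rw [integral_add (by exact (iA.sub (iB.const_mul 2))) iC,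
      integral_sub iA (iB.const_mul 2), integral_const_mul, hIA, hIB, hIC]
    ring
  -- quadratic expansion
  have hquad : ∀ x : Fin p → ℝ,
      (δ - Γ.mulVec x) ⬝ᵥ (δ - Γ.mulVec x) + x ⬝ᵥ SE.mulVec x
        = δ ⬝ᵥ δ - 2 * (x ⬝ᵥ M.mulVec b) + x ⬝ᵥ M.mulVec x := by
    intro x
    have e2 : δ ⬝ᵥ Γ.mulVec x = x ⬝ᵥ Γᵀ.mulVec δ := by
      rw [my_dot_trans Γ δ x, dotProduct_comm]
    have e3 : Γ.mulVec x ⬝ᵥ δ = x ⬝ᵥ Γᵀ.mulVec δ := by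
      rw [dotProduct_comm, e2]
    have e4 : Γ.mulVec x ⬝ᵥ Γ.mulVec x = x ⬝ᵥ M.mulVec x - x ⬝ᵥ SE.mulVec x := by
      rw [hqf x]; ring
    rw [hMb, sub_dotProduct, dotProduct_sub, dotProduct_sub,
      e2, e3, e4]
    ring
  -- minimality: f b ≤ f c
  have hsymm : c ⬝ᵥ M.mulVec b = b ⬝ᵥ M.mulVec c := by
    rw [my_dot_trans M c b, hMsym, dotProduct_comm]
  have hdMd : (0:ℝ) ≤ (c - b) ⬝ᵥ M.mulVec (c - b) := by
    have h := hMposd.posSemidef.dotProduct_mulVec_nonneg (c - b)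
    simpa using h
  have hexpand : (c - b) ⬝ᵥ M.mulVec (c - b)
      = c ⬝ᵥ M.mulVec c - 2 * (c ⬝ᵥ M.mulVec b) + b ⬝ᵥ M.mulVec b := by
    rw [sub_dotProduct, Matrix.mulVec_sub, dotProduct_sub,
      dotProduct_sub, ← hsymm]
    ring
  have hbMb : b ⬝ᵥ M.mulVec b = b ⬝ᵥ M.mulVec b := rfl
  have hfb_le : u ⬝ᵥ u + b ⬝ᵥ SE.mulVec b ≤ c ⬝ᵥ SE.mulVec c := by
    have h1 := hquad b
    have h2 := hquad c
    have hc0 : δ - Γ.mulVec c = 0 := by rw [hΓc, sub_self]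
    rw [hc0] at h2
    simp only [zero_dotProduct, zero_add] at h2
    rw [← hudef] at h1
    linarith
  -- bound f c
  have hccs : ∑ i, c i ^ 2 = w ⬝ᵥ δ := by
    have h1 : ∑ i, c i ^ 2 = c ⬝ᵥ c := by
      simp [dotProduct, sq]
    have h2 : w ⬝ᵥ A.mulVec w = c ⬝ᵥ c := by
      rw [hAdef, ← Matrix.mulVec_mulVec, my_dot_trans Γ w (Γᵀ.mulVec w), ← hcdef]
    rw [h1, ← h2, hAw]
  have hlmax0 : (0:ℝ) ≤ lmax := by
    have h1 := hSE.posSemidef.dotProduct_mulVec_nonneg (Pi.single (⟨0, hp⟩ : Fin p) 1)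
    simp only [star_trivial] at h1
    have h2 := hlmax (Pi.single (⟨0, hp⟩ : Fin p) 1)
    have h3 : ∑ j, (Pi.single (⟨0, hp⟩ : Fin p) 1 : Fin p → ℝ) j ^ 2 = 1 := by
      simp [Pi.single_apply, ite_pow, Finset.sum_ite_eq']
    rw [h3, mul_one] at h2
    linarith
  have hσ2 : (0:ℝ) < σmin ^ 2 := by positivity
  have hW : σmin ^ 2 * (∑ i, w i ^ 2) ≤ w ⬝ᵥ δ := by
    have := hΓ w
    rwa [hAw] at this
  have ht0 : (0:ℝ) ≤ w ⬝ᵥ δ := by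
    have hW2 : (0:ℝ) ≤ σmin ^ 2 * (∑ i, w i ^ 2) := by positivity
    linarith
  have hD0 : (0:ℝ) ≤ ∑ i, δ i ^ 2 := Finset.sum_nonneg fun i _ => sq_nonneg _
  have hCS : (w ⬝ᵥ δ) ^ 2 ≤ (∑ i, w i ^ 2) * ∑ i, δ i ^ 2 :=
    Finset.sum_mul_sq_le_sq_mul_sq Finset.univ w δ
  have hkey : σmin ^ 2 * (w ⬝ᵥ δ) ≤ ∑ i, δ i ^ 2 :=
    my_cs_key hσ2 hW hCS ht0 hD0
  calc ∫ ω, (δ ⬝ᵥ H ω - X ω ⬝ᵥ b) ^ 2 ∂μ = u ⬝ᵥ u + b ⬝ᵥ SE.mulVec b := hint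
    _ ≤ c ⬝ᵥ SE.mulVec c := hfb_le
    _ ≤ lmax * ∑ i, c i ^ 2 := hlmax c
    _ = lmax * (w ⬝ᵥ δ) := by rw [hccs]
    _ ≤ (∑ i, δ i ^ 2) * lmax * (σmin ^ 2)⁻¹ := by
        rw [mul_comm (∑ i, δ i ^ 2) lmax, mul_assoc]
        refine mul_le_mul_of_nonneg_left ?_ hlmax0
        rw [← div_eq_mul_inv, le_div_iff₀ hσ2]
        linarith [hkey]
end

section
/- Under the confounding model with $X = \Gamma^T H + E$ and the assumptions above, the projection coefficient $b = (\Gamma^T\Gamma + \Sigma_E)^{-1}\Gamma^T\delta$ satisfies $\|b\|_2^2 \leq \mathrm{cond}(\Sigma_E) \cdot \|\delta\|_2^2 / \lambda_{\min}(\Gamma)^2$, where $\mathrm{cond}(\Sigma_E) = \lambda_{\max}(\Sigma_E)/\lambda_{\min}(\Sigma_E)$. -/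
open Matrix BigOperators
open scoped MatrixOrder

/-- Bound on the projection coefficient: with `Σ_E` symmetric positive definite with smallest
eigenvalue `lmin` and largest eigenvalue `lmax`, `Γ : q × p` with smallest singular value
`σmin > 0`, and `b = (ΓᵀΓ + Σ_E)⁻¹ Γᵀ δ`, one has
`‖b‖² ≤ cond(Σ_E) ‖δ‖² / λ_min(Γ)²` where `cond(Σ_E) = lmax / lmin`. -/
theorem projection_coefficient_bound
    (p q : ℕ) (hqp : q ≤ p)
    (SE : Matrix (Fin p) (Fin p) ℝ) (hSE : SE.PosDef)
    (lmin lmax : ℝ) (hlmin : 0 < lmin)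
    (hmin : ∀ x : Fin p → ℝ, lmin * ∑ i, x i ^ 2 ≤ x ⬝ᵥ SE.mulVec x)
    (hmax : ∀ x : Fin p → ℝ, x ⬝ᵥ SE.mulVec x ≤ lmax * ∑ i, x i ^ 2)
    (Γ : Matrix (Fin q) (Fin p) ℝ)
    (σmin : ℝ) (hσ : 0 < σmin)
    (hΓ : ∀ x : Fin q → ℝ, σmin ^ 2 * (∑ i, x i ^ 2) ≤ x ⬝ᵥ (Γ * Γᵀ).mulVec x)
    (δ : Fin q → ℝ) (b : Fin p → ℝ)
    (hb : b = (Γᵀ * Γ + SE)⁻¹.mulVec (Γᵀ.mulVec δ)) :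
    ∑ i, b i ^ 2 ≤ (lmax / lmin) * (∑ i, δ i ^ 2) / σmin ^ 2 := by
  rcases Nat.eq_zero_or_pos p with hp | hp
  · subst hp
    interval_cases q
    simp
  -- lmax ≥ lmin > 0
  have hlmax : lmin ≤ lmax := by
    have h1 := hmin ((Pi.single (⟨0, hp⟩ : Fin p) 1 : Fin p → ℝ))
    have h2 := hmax ((Pi.single (⟨0, hp⟩ : Fin p) 1 : Fin p → ℝ))
    have hs : ∑ j, ((Pi.single (⟨0, hp⟩ : Fin p) 1 : Fin p → ℝ)) j ^ 2 = 1 := by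
      simp [Pi.single_apply]
    rw [hs] at h1 h2
    linarith
  -- M is posdef hence invertible; M b = Γᵀ δ
  have hMpd : (Γᵀ * Γ + SE).PosDef := by
    have h1 : (Γᵀ * Γ).PosSemidef := by
      have := Matrix.posSemidef_conjTranspose_mul_self Γ
      simpa using this
    exact Matrix.PosDef.posSemidef_add h1 hSE
  have hMb : (Γᵀ * Γ + SE) *ᵥ b = Γᵀ *ᵥ δ := by
    rw [hb, Matrix.mulVec_mulVec, Matrix.mul_nonsing_inv _ hMpd.det_pos.ne'.isUnit, Matrix.one_mulVec]
  set u : Fin q → ℝ := δ - Γ *ᵥ b with hu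
  have hGb : Γ *ᵥ b = δ - u := by rw [hu]; ring_nf
  have hSb : SE *ᵥ b = Γᵀ *ᵥ u := by
    rw [hu, Matrix.mulVec_sub, Matrix.mulVec_mulVec, ← hMb, Matrix.add_mulVec]
    abel
  -- scalar quantities
  set t := δ ⬝ᵥ u with ht
  set U := u ⬝ᵥ u with hU
  set D := δ ⬝ᵥ δ with hD
  have hUnn : 0 ≤ U := by
    rw [hU, dotProduct]
    exact Finset.sum_nonneg fun i _ => mul_self_nonneg _
  have hDnn : 0 ≤ D := by
    rw [hD, dotProduct]
    exact Finset.sum_nonneg fun i _ => mul_self_nonneg _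
  -- b ⬝ᵥ SE b = t - U
  have hquad : b ⬝ᵥ SE *ᵥ b = t - U := by
    rw [hSb, Matrix.dotProduct_mulVec, Matrix.vecMul_transpose, hGb, sub_dotProduct,
      ht, hU]
  -- fact 1 : lmin * ∑ b² ≤ t - U
  have h1 : lmin * ∑ i, b i ^ 2 ≤ t - U := by
    have := hmin b
    rwa [hquad] at this
  -- fact C : ‖SE b‖² ≤ lmax * (b ⬝ᵥ SE b)
  have hC : (SE *ᵥ b) ⬝ᵥ (SE *ᵥ b) ≤ lmax * (t - U) := by
    set R := CFC.sqrt SE with hR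
    have hRR : R * R = SE := CFC.sqrt_mul_sqrt_self SE hSE.posSemidef.nonneg
    have hRsym : Rᵀ = R := by
      simpa using (CFC.sqrt_nonneg SE).posSemidef.isHermitian.eq
    have hSEsym : SEᵀ = SE := by simpa using hSE.isHermitian.eq
    set y := R *ᵥ b with hy
    have e1 : SE *ᵥ b = R *ᵥ y := by rw [hy, Matrix.mulVec_mulVec, hRR]
    have e2 : (R *ᵥ y) ⬝ᵥ (R *ᵥ y) = y ⬝ᵥ SE *ᵥ y := by
      rw [dotProduct_comm, Matrix.dotProduct_mulVec, ← Matrix.mulVec_transpose, hRsym,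
        Matrix.mulVec_mulVec, hRR, dotProduct_comm, Matrix.dotProduct_mulVec,
        ← Matrix.mulVec_transpose, hSEsym]
    have e3 : ∑ i, y i ^ 2 = b ⬝ᵥ SE *ᵥ b := by
      have : ∑ i, y i ^ 2 = y ⬝ᵥ y := by simp [dotProduct, sq]
      rw [this, hy, dotProduct_comm, Matrix.dotProduct_mulVec, ← Matrix.mulVec_transpose, hRsym,
        Matrix.mulVec_mulVec, hRR]
      exact dotProduct_comm _ _
    calc (SE *ᵥ b) ⬝ᵥ (SE *ᵥ b) = y ⬝ᵥ SE *ᵥ y := by rw [e1, e2]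
      _ ≤ lmax * ∑ i, y i ^ 2 := hmax y
      _ = lmax * (t - U) := by rw [e3, hquad]
  -- fact 2 : σmin² U ≤ lmax (t - U)
  have h2 : σmin ^ 2 * U ≤ lmax * (t - U) := by
    have hg := hΓ u
    have e4 : u ⬝ᵥ (Γ * Γᵀ) *ᵥ u = (SE *ᵥ b) ⬝ᵥ (SE *ᵥ b) := by
      rw [hSb, ← Matrix.mulVec_mulVec, dotProduct_comm, Matrix.dotProduct_mulVec,
        ← Matrix.mulVec_transpose, Matrix.transpose_transpose]
    have e5 : ∑ i, u i ^ 2 = U := by simp [hU, dotProduct, sq]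
    rw [e5, e4] at hg
    exact hg.trans hC
  -- Cauchy-Schwarz : t² ≤ D U
  have h3 : t ^ 2 ≤ D * U := by
    have := Finset.sum_mul_sq_le_sq_mul_sq Finset.univ δ u
    simpa [ht, hD, hU, dotProduct, sq] using this
  -- combine
  have hbnn : 0 ≤ ∑ i, b i ^ 2 := Finset.sum_nonneg fun i _ => sq_nonneg _
  have hlmaxpos : 0 < lmax := lt_of_lt_of_le hlmin hlmax
  have hDs : ∑ i, δ i ^ 2 = D := by simp [hD, dotProduct, sq]
  have htn : 0 ≤ t := by nlinarith [h1, hUnn, hbnn]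
  rw [hDs, div_mul_eq_mul_div, div_div, le_div_iff₀ (by positivity)]
  have hkey : σmin ^ 2 * t ≤ lmax * D := by
    have ha : σmin ^ 2 * U ≤ lmax * t := by
      nlinarith [h2, mul_nonneg hlmaxpos.le hUnn]
    rcases htn.eq_or_lt with h0 | h0
    · rw [← h0]
      simpa using mul_nonneg hlmaxpos.le hDnn
    · refine le_of_mul_le_mul_right ?_ h0
      have hb2 := mul_le_mul_of_nonneg_left ha hDnn
      have hb3 := mul_le_mul_of_nonneg_left h3 (sq_nonneg σmin)
      nlinarith [hb2, hb3]
  nlinarith [mul_le_mul_of_nonneg_left h1 (sq_nonneg σmin), hkey, hUnn, sq_nonneg σmin,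
    mul_nonneg (sq_nonneg σmin) hUnn]
end

section
/- Full statement of Lemma 2 (bias bound): assume $X = \Gamma^T H + E$ with $\mathbb{E}[H]=0$, $\mathbb{E}[HH^T]=I_q$, $\mathbb{E}[E]=0$, $\mathbb{E}[HE^T]=0$, $\Sigma_E = \mathbb{E}[EE^T]$ symmetric positive definite, and $\Gamma \in \mathbb{R}^{q \times p}$ with smallest singular value $\lambda_{\min}(\Gamma) > 0$. Let $b = (\Gamma^T\Gamma + \Sigma_E)^{-1}\Gamma^T\delta$. Then $\mathbb{E}[(H^T\delta - X^Tb)^2] = \delta^T (I_q + \Gamma\Sigma_E^{-1}\Gamma^T)^{-1}\delta \leq \|\delta\|_2^2 \lambda_{\max}(\Sigma_E)\lambda_{\min}(\Gamma)^{-2}$. -/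
open Matrix MeasureTheory BigOperators

section Helpers

variable {Ω : Type*} [MeasurableSpace Ω] {μ : Measure Ω}

lemma my_int_mul {f g : Ω → ℝ} (hf : MemLp f 2 μ) (hg : MemLp g 2 μ) :
    Integrable (fun ω => f ω * g ω) μ := by
  have h : (1 : ENNReal) / 1 = 1 / 2 + 1 / 2 := by
    rw [ENNReal.add_halves, one_div_one]
  have : MemLp (f • g) 1 μ := hg.smul hf
  rw [memLp_one_iff_integrable] at this
  exact this

lemma my_memLp_dot {n : ℕ} (c : Fin n → ℝ) (F : Ω → Fin n → ℝ)
    (hF : ∀ i, MemLp (fun ω => F ω i) 2 μ) :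
    MemLp (fun ω => c ⬝ᵥ F ω) 2 μ := by
  simp only [dotProduct]
  exact memLp_finset_sum _ (fun i _ => ((hF i).const_mul (c i)))

lemma my_integral_dot_dot {m n : ℕ} (c : Fin m → ℝ) (d : Fin n → ℝ)
    (F : Ω → Fin m → ℝ) (G : Ω → Fin n → ℝ)
    (hF : ∀ i, MemLp (fun ω => F ω i) 2 μ) (hG : ∀ j, MemLp (fun ω => G ω j) 2 μ) :
    ∫ ω, (c ⬝ᵥ F ω) * (d ⬝ᵥ G ω) ∂μ = ∑ i, ∑ j, c i * d j * ∫ ω, F ω i * G ω j ∂μ := by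
  have hpt : ∀ ω, (c ⬝ᵥ F ω) * (d ⬝ᵥ G ω)
      = ∑ i, ∑ j, c i * d j * (F ω i * G ω j) := by
    intro ω
    simp only [dotProduct, Finset.sum_mul_sum]
    exact Finset.sum_congr rfl fun i _ => Finset.sum_congr rfl fun j _ => by ring
  simp only [hpt]
  rw [integral_finset_sum _ (fun i _ => ?_)]
  · refine Finset.sum_congr rfl fun i _ => ?_
    rw [integral_finset_sum _ (fun j _ => ((my_int_mul (hF i) (hG j)).const_mul _))]
    exact Finset.sum_congr rfl fun j _ => integral_const_mul _ _
  · exact integrable_finset_sum _ (fun j _ => ((my_int_mul (hF i) (hG j)).const_mul _))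

lemma my_dot_transpose {m n : ℕ} (A : Matrix (Fin m) (Fin n) ℝ) (x : Fin m → ℝ) (y : Fin n → ℝ) :
    (Aᵀ *ᵥ x) ⬝ᵥ y = x ⬝ᵥ (A *ᵥ y) := by
  rw [Matrix.mulVec_transpose, ← Matrix.dotProduct_mulVec]

lemma my_dot_self {n : ℕ} (x : Fin n → ℝ) : x ⬝ᵥ x = ∑ i, x i ^ 2 := by
  simp [dotProduct, pow_two]

end Helpers

set_option maxHeartbeats 1000000 in
/-- Full bias bound (Lemma 2): in the confounding model `X = Γᵀ H + E` with `E[H]=0`,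
`E[HHᵀ]=I_q`, `E[E]=0`, `E[HEᵀ]=0`, `Σ_E = E[EEᵀ]` symmetric positive definite, smallest
singular value `σmin > 0` of `Γ` (Rayleigh characterization `σmin² ‖x‖² ≤ xᵀ Γ Γᵀ x`), largest
eigenvalue `lmax` of `Σ_E` (`xᵀ Σ_E x ≤ lmax ‖x‖²`), and `b = (ΓᵀΓ + Σ_E)⁻¹ Γᵀ δ`:
`E[(Hᵀδ - Xᵀb)²] = δᵀ (I_q + Γ Σ_E⁻¹ Γᵀ)⁻¹ δ ≤ ‖δ‖² lmax σmin⁻²`. -/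
theorem confounding_bias_identity_and_bound
    {Ω : Type*} [MeasurableSpace Ω] (μ : Measure Ω) [IsProbabilityMeasure μ]
    (p q : ℕ) (hqp : q ≤ p)
    (H : Ω → Fin q → ℝ) (Ev : Ω → Fin p → ℝ)
    (hHm : ∀ i, MemLp (fun ω => H ω i) 2 μ)
    (hEm : ∀ i, MemLp (fun ω => Ev ω i) 2 μ)
    (hHmean : ∀ i, ∫ ω, H ω i ∂μ = 0)
    (hEmean : ∀ i, ∫ ω, Ev ω i ∂μ = 0)
    (hHH : ∀ i j, ∫ ω, H ω i * H ω j ∂μ = (1 : Matrix (Fin q) (Fin q) ℝ) i j)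
    (hHE : ∀ i j, ∫ ω, H ω i * Ev ω j ∂μ = 0)
    (SE : Matrix (Fin p) (Fin p) ℝ) (hSE : SE.PosDef)
    (hEE : ∀ i j, ∫ ω, Ev ω i * Ev ω j ∂μ = SE i j)
    (Γ : Matrix (Fin q) (Fin p) ℝ)
    (σmin lmax : ℝ) (hσ : 0 < σmin)
    (hΓ : ∀ x : Fin q → ℝ, σmin ^ 2 * (∑ i, x i ^ 2) ≤ x ⬝ᵥ (Γ * Γᵀ).mulVec x)
    (hlmax : ∀ x : Fin p → ℝ, x ⬝ᵥ SE.mulVec x ≤ lmax * ∑ i, x i ^ 2)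
    (X : Ω → Fin p → ℝ) (hX : X = fun ω => Γᵀ.mulVec (H ω) + Ev ω)
    (δ : Fin q → ℝ) (b : Fin p → ℝ)
    (hb : b = (Γᵀ * Γ + SE)⁻¹.mulVec (Γᵀ.mulVec δ)) :
    (∫ ω, (δ ⬝ᵥ H ω - X ω ⬝ᵥ b) ^ 2 ∂μ
        = δ ⬝ᵥ (((1 : Matrix (Fin q) (Fin q) ℝ) + Γ * SE⁻¹ * Γᵀ)⁻¹.mulVec δ)) ∧
    δ ⬝ᵥ (((1 : Matrix (Fin q) (Fin q) ℝ) + Γ * SE⁻¹ * Γᵀ)⁻¹.mulVec δ)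
      ≤ (∑ i, δ i ^ 2) * lmax * (σmin ^ 2)⁻¹ := by
  classical
  have hSEdet : IsUnit SE.det := hSE.det_pos.ne'.isUnit
  have hSE1 : SE * SE⁻¹ = 1 := Matrix.mul_nonsing_inv _ hSEdet
  have hSEsymm : SEᵀ = SE := by
    rw [← Matrix.conjTranspose_eq_transpose_of_trivial]; exact hSE.isHermitian.eq
  have hSEinv : SE⁻¹.PosDef := hSE.inv
  have hApsd : (Γ * SE⁻¹ * Γᵀ).PosSemidef := by
    have h := hSEinv.posSemidef.mul_mul_conjTranspose_same Γ
    rwa [Matrix.conjTranspose_eq_transpose_of_trivial] at h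
  have hIA : ((1 : Matrix (Fin q) (Fin q) ℝ) + Γ * SE⁻¹ * Γᵀ).PosDef :=
    Matrix.PosDef.add_posSemidef Matrix.PosDef.one hApsd
  have hKdet : IsUnit ((1 : Matrix (Fin q) (Fin q) ℝ) + Γ * SE⁻¹ * Γᵀ).det :=
    hIA.det_pos.ne'.isUnit
  set A := Γ * SE⁻¹ * Γᵀ with hA
  set K := ((1 : Matrix (Fin q) (Fin q) ℝ) + A)⁻¹ with hKdef
  have hK : (1 + A) * K = 1 := Matrix.mul_nonsing_inv _ hKdet
  have hMpd : (Γᵀ * Γ + SE).PosDef := by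
    have hps : (Γᵀ * Γ).PosSemidef := by
      have h := Matrix.posSemidef_conjTranspose_mul_self Γ
      rwa [Matrix.conjTranspose_eq_transpose_of_trivial] at h
    exact Matrix.PosDef.posSemidef_add hps hSE
  have hMdet : IsUnit (Γᵀ * Γ + SE).det := hMpd.det_pos.ne'.isUnit
  have hMinv : (Γᵀ * Γ + SE)⁻¹ * (Γᵀ * Γ + SE) = 1 := Matrix.nonsing_inv_mul _ hMdet
  have hMid : (Γᵀ * Γ + SE) * (SE⁻¹ * Γᵀ * K) = Γᵀ := by
    have e1 : SE * (SE⁻¹ * Γᵀ * K) = Γᵀ * K := by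
      rw [← Matrix.mul_assoc, ← Matrix.mul_assoc, hSE1, Matrix.one_mul]
    have e2 : Γᵀ * Γ * (SE⁻¹ * Γᵀ * K) = Γᵀ * (A * K) := by
      simp only [hA, Matrix.mul_assoc]
    rw [Matrix.add_mul, e1, e2, ← Matrix.mul_add]
    have e3 : A * K + K = (1 + A) * K := by rw [Matrix.add_mul, Matrix.one_mul, add_comm]
    rw [e3, hK, Matrix.mul_one]
  have hMG : (Γᵀ * Γ + SE)⁻¹ * Γᵀ = SE⁻¹ * Γᵀ * K :=
    calc (Γᵀ * Γ + SE)⁻¹ * Γᵀ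
        = (Γᵀ * Γ + SE)⁻¹ * ((Γᵀ * Γ + SE) * (SE⁻¹ * Γᵀ * K)) := by rw [hMid]
      _ = SE⁻¹ * Γᵀ * K := by rw [← Matrix.mul_assoc, hMinv, Matrix.one_mul]
  have hbform : b = (SE⁻¹ * Γᵀ * K) *ᵥ δ := by
    rw [hb, Matrix.mulVec_mulVec, hMG]
  set v := K *ᵥ δ with hv
  have hδv : δ = v + A *ᵥ v := by
    have h : (1 + A) *ᵥ v = δ := by
      rw [hv, Matrix.mulVec_mulVec, hK, Matrix.one_mulVec]
    rw [← h, Matrix.add_mulVec, Matrix.one_mulVec]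
  have hbv : b = SE⁻¹ *ᵥ (Γᵀ *ᵥ v) := by
    rw [hbform, hv, Matrix.mulVec_mulVec, Matrix.mulVec_mulVec, Matrix.mul_assoc]
  have hGb : Γ *ᵥ b = A *ᵥ v := by
    rw [hbv, Matrix.mulVec_mulVec, Matrix.mulVec_mulVec, hA]
  have hSEb : SE *ᵥ b = Γᵀ *ᵥ v := by
    rw [hbv, Matrix.mulVec_mulVec, hSE1, Matrix.one_mulVec]
  set c := δ - Γ *ᵥ b with hcdef
  have hc : c = v := by
    rw [hcdef, hGb]
    conv_lhs => rw [hδv]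
    exact add_sub_cancel_right _ _
  have hpt : ∀ ω, δ ⬝ᵥ H ω - X ω ⬝ᵥ b = c ⬝ᵥ H ω - b ⬝ᵥ Ev ω := by
    intro ω
    rw [hX]
    show δ ⬝ᵥ H ω - (Γᵀ *ᵥ H ω + Ev ω) ⬝ᵥ b = (δ - Γ *ᵥ b) ⬝ᵥ H ω - b ⬝ᵥ Ev ω
    rw [add_dotProduct, sub_dotProduct, my_dot_transpose,
      dotProduct_comm (Ev ω) b, dotProduct_comm (H ω) (Γ *ᵥ b)]
    ring
  have key : ∫ ω, (δ ⬝ᵥ H ω - X ω ⬝ᵥ b) ^ 2 ∂μ = c ⬝ᵥ c + b ⬝ᵥ (SE *ᵥ b) := by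
    have mf : MemLp (fun ω => c ⬝ᵥ H ω) 2 μ := my_memLp_dot c H hHm
    have mg : MemLp (fun ω => b ⬝ᵥ Ev ω) 2 μ := my_memLp_dot b Ev hEm
    have iff2 : Integrable (fun ω => (c ⬝ᵥ H ω) * (c ⬝ᵥ H ω)) μ := my_int_mul mf mf
    have ifg : Integrable (fun ω => (c ⬝ᵥ H ω) * (b ⬝ᵥ Ev ω)) μ := my_int_mul mf mg
    have igg : Integrable (fun ω => (b ⬝ᵥ Ev ω) * (b ⬝ᵥ Ev ω)) μ := my_int_mul mg mg
    have h1 : ∀ ω, (δ ⬝ᵥ H ω - X ω ⬝ᵥ b) ^ 2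
        = (c ⬝ᵥ H ω) * (c ⬝ᵥ H ω) - 2 * ((c ⬝ᵥ H ω) * (b ⬝ᵥ Ev ω))
          + (b ⬝ᵥ Ev ω) * (b ⬝ᵥ Ev ω) := by
      intro ω; rw [hpt ω]; ring
    have imul2 : Integrable (fun ω => 2 * ((c ⬝ᵥ H ω) * (b ⬝ᵥ Ev ω))) μ := ifg.const_mul 2
    have isub : Integrable
        (fun ω => (c ⬝ᵥ H ω) * (c ⬝ᵥ H ω) - 2 * ((c ⬝ᵥ H ω) * (b ⬝ᵥ Ev ω))) μ :=
      iff2.sub imul2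
    simp only [h1]
    rw [integral_add isub igg, integral_sub iff2 imul2,
      integral_const_mul, my_integral_dot_dot c c H H hHm hHm,
      my_integral_dot_dot c b H Ev hHm hEm, my_integral_dot_dot b b Ev Ev hEm hEm]
    simp only [hHH, hHE, hEE, mul_zero, Finset.sum_const_zero]
    have t1 : ∑ i, ∑ j, c i * c j * (1 : Matrix (Fin q) (Fin q) ℝ) i j = c ⬝ᵥ c := by
      simp [Matrix.one_apply, mul_ite, Finset.sum_ite_eq, dotProduct]
    have t3 : ∑ i, ∑ j, b i * b j * SE i j = b ⬝ᵥ (SE *ᵥ b) := by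
      simp only [dotProduct, Matrix.mulVec, dotProduct, Finset.mul_sum]
      exact Finset.sum_congr rfl fun i _ => Finset.sum_congr rfl fun j _ => by ring
    rw [t1, t3]
    ring
  have hsum : c ⬝ᵥ c + b ⬝ᵥ (SE *ᵥ b) = δ ⬝ᵥ v := by
    rw [hc, hSEb]
    have hb2 : b ⬝ᵥ (Γᵀ *ᵥ v) = (A *ᵥ v) ⬝ᵥ v := by
      rw [dotProduct_comm b (Γᵀ *ᵥ v), my_dot_transpose, hGb,
        dotProduct_comm v (A *ᵥ v)]
    rw [hb2, ← add_dotProduct, ← hδv]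
  have heq : ∫ ω, (δ ⬝ᵥ H ω - X ω ⬝ᵥ b) ^ 2 ∂μ = δ ⬝ᵥ v := key.trans hsum
  refine ⟨heq, ?_⟩
  -- Inequality part
  have hWexp : δ ⬝ᵥ v = (∑ i, v i ^ 2) + (Γᵀ *ᵥ v) ⬝ᵥ (SE⁻¹ *ᵥ (Γᵀ *ᵥ v)) := by
    conv_lhs => rw [hδv]
    rw [add_dotProduct, my_dot_self]
    congr 1
    rw [dotProduct_comm (A *ᵥ v) v]
    show v ⬝ᵥ ((Γ * SE⁻¹ * Γᵀ) *ᵥ v) = _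
    rw [← Matrix.mulVec_mulVec, ← Matrix.mulVec_mulVec, ← my_dot_transpose]
  -- lower bound for SE⁻¹ quadratic form
  have hSEinvLB : ∀ w : Fin p → ℝ, (∑ i, w i ^ 2) ≤ lmax * (w ⬝ᵥ (SE⁻¹ *ᵥ w)) := by
    intro w
    by_cases hw : w = 0
    · simp [hw]
    · have hs : 0 < w ⬝ᵥ (SE *ᵥ w) := by
        have h := hSE.dotProduct_mulVec_pos hw; simpa using h
      have hinv0 : 0 ≤ w ⬝ᵥ (SE⁻¹ *ᵥ w) := by
        have h := hSEinv.posSemidef.dotProduct_mulVec_nonneg w; simpa using h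
      set u := SE⁻¹ *ᵥ w with hu
      have e0 : SE *ᵥ u = w := by
        rw [hu, Matrix.mulVec_mulVec, hSE1, Matrix.one_mulVec]
      have e2 : u ⬝ᵥ (SE *ᵥ w) = w ⬝ᵥ w := by
        rw [Matrix.dotProduct_mulVec, ← Matrix.mulVec_transpose, hSEsymm, e0]
      have hquad : ∀ t : ℝ, 0 ≤ (w ⬝ᵥ (SE *ᵥ w)) * (t * t)
          + (-2 * (w ⬝ᵥ w)) * t + (w ⬝ᵥ (SE⁻¹ *ᵥ w)) := by
        intro t
        have hz : 0 ≤ (u - t • w) ⬝ᵥ (SE *ᵥ (u - t • w)) := by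
          have h := hSE.posSemidef.dotProduct_mulVec_nonneg (u - t • w); simpa using h
        have hexp : (u - t • w) ⬝ᵥ (SE *ᵥ (u - t • w))
            = (w ⬝ᵥ (SE *ᵥ w)) * (t * t) + (-2 * (w ⬝ᵥ w)) * t + (w ⬝ᵥ (SE⁻¹ *ᵥ w)) := by
          rw [Matrix.mulVec_sub, Matrix.mulVec_smul, sub_dotProduct,
            smul_dotProduct, dotProduct_sub, dotProduct_sub,
            dotProduct_smul, dotProduct_smul, e0, e2]
          have e4 : u ⬝ᵥ w = w ⬝ᵥ (SE⁻¹ *ᵥ w) := dotProduct_comm u w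
          rw [e4]
          simp only [smul_eq_mul]
          ring
        rw [← hexp]; exact hz
      have hdisc := discrim_le_zero hquad
      rw [discrim] at hdisc
      have hCS2 : (w ⬝ᵥ w) ^ 2 ≤ (w ⬝ᵥ (SE *ᵥ w)) * (w ⬝ᵥ (SE⁻¹ *ᵥ w)) := by nlinarith
      have hwpos : 0 < w ⬝ᵥ w := by
        rcases lt_or_eq_of_le (Finset.sum_nonneg fun i _ => sq_nonneg _ : (0:ℝ) ≤ ∑ i, w i ^ 2) with h | h
        · rwa [my_dot_self]
        · exact absurd (dotProduct_self_eq_zero.mp (by rw [my_dot_self, ← h]))  hw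
      have hchain : (w ⬝ᵥ (SE *ᵥ w)) * (w ⬝ᵥ (SE⁻¹ *ᵥ w))
          ≤ (lmax * (w ⬝ᵥ w)) * (w ⬝ᵥ (SE⁻¹ *ᵥ w)) := by
        apply mul_le_mul_of_nonneg_right _ hinv0
        calc w ⬝ᵥ (SE *ᵥ w) ≤ lmax * ∑ i, w i ^ 2 := hlmax w
          _ = lmax * (w ⬝ᵥ w) := by rw [my_dot_self]
      have hfin : (w ⬝ᵥ w) * (w ⬝ᵥ w) ≤ (w ⬝ᵥ w) * (lmax * (w ⬝ᵥ (SE⁻¹ *ᵥ w))) := by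
        nlinarith
      have := le_of_mul_le_mul_left hfin hwpos
      rwa [my_dot_self] at this
  set w := Γᵀ *ᵥ v with hwdef
  have hGG : v ⬝ᵥ ((Γ * Γᵀ) *ᵥ v) = ∑ i, w i ^ 2 := by
    rw [← Matrix.mulVec_mulVec, ← my_dot_transpose, ← hwdef, my_dot_self]
  have hN0 : (0:ℝ) ≤ ∑ i, v i ^ 2 := Finset.sum_nonneg fun i _ => sq_nonneg _
  have hW0 : 0 ≤ w ⬝ᵥ (SE⁻¹ *ᵥ w) := by
    have h := hSEinv.posSemidef.dotProduct_mulVec_nonneg w; simpa using h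
  have hS0 : 0 ≤ δ ⬝ᵥ v := by rw [hWexp]; exact add_nonneg hN0 hW0
  rcases eq_or_lt_of_le hS0 with hS | hS
  · -- δ ⬝ᵥ v = 0
    rcases Nat.eq_zero_or_pos p with hp | hp
    · have hq0 : q = 0 := Nat.le_antisymm (hp ▸ hqp) (Nat.zero_le _)
      subst hq0
      rw [← hS]
      simp
    · have hlpos : 0 < lmax := by
        have i0 : Fin p := ⟨0, hp⟩
        have hx : (Pi.single i0 1 : Fin p → ℝ) ≠ 0 := by
          intro h
          have := congrFun h i0
          simp at this
        have h1 := hSE.dotProduct_mulVec_pos hx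
        simp only [star_trivial] at h1
        have h2 := hlmax (Pi.single i0 1)
        have h3 : ∑ i, (Pi.single i0 1 : Fin p → ℝ) i ^ 2 = 1 := by
          simp [Pi.single_apply]
        rw [h3, mul_one] at h2
        linarith
      rw [← hS]
      positivity
  · -- δ ⬝ᵥ v > 0
    have hw' := hSEinvLB w
    have hΓv := hΓ v
    rw [hGG] at hΓv
    -- lmax > 0 : since W > 0 (else S = 0)
    have hD0 : (0:ℝ) ≤ ∑ i, δ i ^ 2 := Finset.sum_nonneg fun i _ => sq_nonneg _
    have hσ2 : (0:ℝ) < σmin ^ 2 := by positivity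
    have hWpos : 0 < w ⬝ᵥ (SE⁻¹ *ᵥ w) := by
      rcases eq_or_lt_of_le hW0 with h | h
      · exfalso
        have hwz : w = 0 := by
          by_contra hwz
          exact (ne_of_gt (show (0:ℝ) < w ⬝ᵥ (SE⁻¹ *ᵥ w) by
            simpa using hSEinv.dotProduct_mulVec_pos hwz)) h.symm
        have hsw : ∑ i, w i ^ 2 = 0 := by rw [hwz]; simp
        have hNz : ∑ i, v i ^ 2 ≤ 0 := by nlinarith [hΓv]
        have : δ ⬝ᵥ v ≤ 0 := by rw [hWexp, ← h]; linarith
        linarith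
      · exact h
    have hwne : w ≠ 0 := by
      intro hwz
      rw [hwz] at hWpos
      simp at hWpos
    have hswpos : 0 < ∑ i, w i ^ 2 := by
      rcases lt_or_eq_of_le (Finset.sum_nonneg fun i _ => sq_nonneg _ : (0:ℝ) ≤ ∑ i, w i ^ 2) with h | h
      · exact h
      · exact absurd (dotProduct_self_eq_zero.mp (by rw [my_dot_self, ← h])) hwne
    have hlpos : 0 < lmax := by nlinarith [hw', hWpos, hswpos]
    have hWleS : w ⬝ᵥ (SE⁻¹ *ᵥ w) ≤ δ ⬝ᵥ v := by rw [hWexp]; linarith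
    have hdv : δ ⬝ᵥ v = ∑ i, δ i * v i := rfl
    have F1 : (δ ⬝ᵥ v) ^ 2 ≤ (∑ i, δ i ^ 2) * ∑ i, v i ^ 2 := by
      rw [hdv]; exact Finset.sum_mul_sq_le_sq_mul_sq Finset.univ δ v
    have s1 : σmin ^ 2 * (∑ i, v i ^ 2) ≤ lmax * (δ ⬝ᵥ v) := by
      nlinarith [hΓv, hw', hWleS, hlpos]
    have s2 : σmin ^ 2 * (δ ⬝ᵥ v) ^ 2 ≤ (∑ i, δ i ^ 2) * (lmax * (δ ⬝ᵥ v)) := by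
      nlinarith [mul_le_mul_of_nonneg_left F1 hσ2.le, mul_le_mul_of_nonneg_left s1 hD0]
    rw [← div_eq_mul_inv, le_div_iff₀ hσ2]
    nlinarith [s2, hS]
end
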